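/- Let f: X → X be a bi-asymptotically c-expansive continuous surjection of a compact metric space with the shadowing property, B a basic set, and p, q ∈ Per(f) ∩ B. If C_p ∩ C_q ≠ ∅ then C_p = C_q, where C_x = closure of (W^s(x) ∩ B). -/

import Mathlib

open Filter Topology Function

/-- A full orbit (element of the inverse limit) of `f`. -/
def FullOrbit {X : Type*} (f : X → X) (x : ℤ → X) : Prop := ∀ n : ℤ, f (x n) = x (n + 1)

/-- `f` is bi-asymptotically `c`-expansive with constant `c`. -/
def BiAsympCExpWith {X : Type*} [MetricSpace X] (f : X → X) (c : ℝ) : Prop :=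
  (∀ x y : ℤ → X, FullOrbit f x → FullOrbit f y →
      (∀ n : ℕ, dist (x n) (y n) ≤ c) →
      Tendsto (fun n : ℕ => dist (x n) (y n)) atTop (𝓝 0)) ∧
  (∀ x y : ℤ → X, FullOrbit f x → FullOrbit f y →
      (∀ n : ℕ, dist (x (-(n : ℤ))) (y (-(n : ℤ))) ≤ c) →
      Tendsto (fun n : ℕ => dist (x (-(n : ℤ))) (y (-(n : ℤ)))) atTop (𝓝 0))

/-- `f` is bi-asymptotically `c`-expansive (for some constant). -/
def BiAsympCExpansive {X : Type*} [MetricSpace X] (f : X → X) : Prop :=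
  ∃ c > 0, BiAsympCExpWith f c

/-- `f` has the shadowing property. -/
def Shadowing {X : Type*} [MetricSpace X] (f : X → X) : Prop :=
  ∀ ε > 0, ∃ δ > 0, ∀ x : ℕ → X, (∀ n : ℕ, dist (f (x n)) (x (n + 1)) ≤ δ) →
    ∃ y : X, ∀ n : ℕ, dist (f^[n] y) (x n) ≤ ε

/-- `x` is a non-wandering point of `f`. -/
def NonWandering {X : Type*} [TopologicalSpace X] (f : X → X) (x : X) : Prop :=
  ∀ U : Set X, IsOpen U → x ∈ U → ∃ n : ℕ, 0 < n ∧ (f^[n] '' U ∩ U).Nonempty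

/-- There is a finite `α`-chain from `x` to `y`. -/
def ChainRel {X : Type*} [MetricSpace X] (f : X → X) (α : ℝ) (x y : X) : Prop :=
  ∃ (n : ℕ) (z : ℕ → X), 0 < n ∧ z 0 = x ∧ z n = y ∧
    ∀ i < n, dist (f (z i)) (z (i + 1)) ≤ α

/-- `x` is a chain recurrent point of `f`. -/
def ChainRecurrent {X : Type*} [MetricSpace X] (f : X → X) (x : X) : Prop :=
  ∀ α > 0, ChainRel f α x x

/-- chain equivalence of chain recurrent points -/
def ChainEquiv {X : Type*} [MetricSpace X] (f : X → X) (x y : X) : Prop :=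
  ∀ α > 0, ChainRel f α x y ∧ ChainRel f α y x

/-- basic sets: chain equivalence classes of `CR(f)` -/
def IsBasicSet {X : Type*} [MetricSpace X] (f : X → X) (B : Set X) : Prop :=
  ∃ x : X, ChainRecurrent f x ∧ B = {y | ChainRecurrent f y ∧ ChainEquiv f x y}

/-- the stable set of `x`. -/
def Ws {X : Type*} [MetricSpace X] (f : X → X) (x : X) : Set X :=
  {y | Tendsto (fun n : ℕ => dist (f^[n] x) (f^[n] y)) atTop (𝓝 0)}

/-- the unstable set of a full orbit `x`. -/
def Wu {X : Type*} [MetricSpace X] (f : X → X) (x : ℤ → X) : Set X :=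
  {y₀ | ∃ y : ℤ → X, FullOrbit f y ∧ y 0 = y₀ ∧
    Tendsto (fun n : ℕ => dist (x (-(n : ℤ))) (y (-(n : ℤ)))) atTop (𝓝 0)}

/-- `g` restricted to `A` is topologically transitive. -/
def TopTransOn {X : Type*} [TopologicalSpace X] (g : X → X) (A : Set X) : Prop :=
  ∀ U V : Set X, IsOpen U → IsOpen V → (U ∩ A).Nonempty → (V ∩ A).Nonempty →
    ∃ n : ℕ, 0 < n ∧ (g^[n] '' (U ∩ A) ∩ (V ∩ A)).Nonempty

/-- `g` restricted to `A` is topologically mixing. -/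
def TopMixingOn {X : Type*} [TopologicalSpace X] (g : X → X) (A : Set X) : Prop :=
  ∀ U V : Set X, IsOpen U → IsOpen V → (U ∩ A).Nonempty → (V ∩ A).Nonempty →
    ∃ N : ℕ, ∀ n ≥ N, (g^[n] '' (U ∩ A) ∩ (V ∩ A)).Nonempty

/-- `g` is asymptotically expansive with constant `c`. -/
def AsympExpWith {X : Type*} [MetricSpace X] (g : X → X) (c : ℝ) : Prop :=
  ∀ x y : X, (∀ n : ℕ, dist (g^[n] x) (g^[n] y) ≤ c) →
    Tendsto (fun n : ℕ => dist (g^[n] x) (g^[n] y)) atTop (𝓝 0)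

section A
variable {X : Type*} (f : X → X)

theorem fullOrbit_iterate {o : ℤ → X} (h : FullOrbit f o) (z : ℤ) (n : ℕ) :
    o (z + n) = f^[n] (o z) := by
  induction n with
  | zero => simp
  | succ k ih =>
      have : z + (k + 1 : ℕ) = (z + k) + 1 := by push_cast; ring
      rw [this, ← h (z + k), ih, Function.iterate_succ_apply']

theorem fullOrbit_shift {o : ℤ → X} (h : FullOrbit f o) (t : ℤ) :
    FullOrbit f (fun n => o (n + t)) := by
  intro n
  have := h (n + t)
  simpa [add_right_comm] using this

theorem exists_fullOrbit (hsurj : Function.Surjective f) (y : X) :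
    ∃ o : ℤ → X, FullOrbit f o ∧ ∀ n : ℕ, o n = f^[n] y := by
  classical
  set g := Function.surjInv hsurj with hg
  have hfg : ∀ z, f (g z) = z := fun z => Function.surjInv_eq hsurj z
  refine ⟨fun n => if 0 ≤ n then f^[n.toNat] y else g^[(-n).toNat] y, ?_, ?_⟩
  · intro n
    rcases le_or_gt 0 n with hn | hn
    · have h1 : 0 ≤ n + 1 := by omega
      have h2 : (n + 1).toNat = n.toNat + 1 := by omega
      simp only [hn, h1, if_true, h2, Function.iterate_succ_apply']
    · rcases eq_or_lt_of_le (by omega : n ≤ -1) with he | hl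
      · subst he  -- n = -1? he : n = -1
        simp [hfg]
      · have h0 : ¬ 0 ≤ n := by omega
        have h1 : ¬ 0 ≤ n + 1 := by omega
        have h2 : (-n).toNat = (-(n+1)).toNat + 1 := by omega
        simp only [h0, h1, if_false, h2, Function.iterate_succ_apply]
        rw [← Function.iterate_succ_apply, Function.iterate_succ_apply', hfg]
  · intro n; simp
end A
section B
variable {X : Type*} [MetricSpace X] [CompactSpace X] {f : X → X}

theorem two_sided_shadowing (hf : Continuous f) (hsh : Shadowing f) :
    ∀ ε > 0, ∃ δ > 0, ∀ u : ℤ → X, (∀ n : ℤ, dist (f (u n)) (u (n + 1)) ≤ δ) →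
      ∃ w : ℤ → X, FullOrbit f w ∧ ∀ n : ℤ, dist (w n) (u n) ≤ ε := by
  intro ε hε
  obtain ⟨δ, hδ, hsd⟩ := hsh ε hε
  refine ⟨δ, hδ, fun u hu => ?_⟩
  have hyk : ∀ k : ℕ, ∃ y : X, ∀ n : ℕ, dist (f^[n] y) (u ((n : ℤ) - k)) ≤ ε := by
    intro k
    apply hsd (fun n => u ((n : ℤ) - k))
    intro n
    have := hu ((n : ℤ) - k)
    have e : ((n + 1 : ℕ) : ℤ) - k = ((n : ℤ) - k) + 1 := by push_cast; ring
    rw [e]; exact this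
  choose y hy using hyk
  set O : ℕ → (ℤ → X) := fun k z => f^[(z + k).toNat] (y k) with hO
  obtain ⟨w, hw⟩ := exists_clusterPt_of_compactSpace (map O atTop)
  have key : ∀ n : ℤ, dist (w n) (u n) ≤ ε ∧ f (w n) = w (n + 1) := by
    intro n
    set C : Set (ℤ → X) := {v | dist (v n) (u n) ≤ ε ∧ f (v n) = v (n + 1)} with hC
    have hclosed : IsClosed C := by
      apply IsClosed.inter
      · exact isClosed_le ((continuous_apply n).dist continuous_const) continuous_const
      · exact isClosed_eq (hf.comp (continuous_apply n)) (continuous_apply (n + 1))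
    have hev : ∀ᶠ k in atTop, O k ∈ C := by
      rw [eventually_atTop]
      refine ⟨(-n).toNat, fun k hk => ?_⟩
      have hnk : 0 ≤ n + k := by omega
      constructor
      · have := hy k (n + k).toNat
        have e : (((n + k).toNat : ℤ)) - k = n := by omega
        rw [e] at this
        exact this
      · show f (f^[(n + k).toNat] (y k)) = f^[(n + 1 + k).toNat] (y k)
        have e : (n + 1 + k).toNat = (n + k).toNat + 1 := by omega
        rw [e, Function.iterate_succ_apply']
    have hle : map O atTop ≤ 𝓟 C := le_principal_iff.mpr (mem_map.mpr hev)
    have : ClusterPt w (𝓟 C) := hw.mono hle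
    have hmem : w ∈ closure C := mem_closure_iff_clusterPt.mpr this
    rwa [hclosed.closure_eq] at hmem
  exact ⟨w, fun n => (key n).2, fun n => (key n).1⟩
end B
section C
variable {X : Type*} [MetricSpace X] (f : X → X)

/-- a chain of length exactly `T` (possibly 0). -/
def ChainLen (α : ℝ) (u v : X) (T : ℕ) : Prop :=
  ∃ z : ℕ → X, z 0 = u ∧ z T = v ∧ ∀ i < T, dist (f (z i)) (z (i + 1)) ≤ α

variable {f}

theorem ChainLen.refl (α : ℝ) (u : X) : ChainLen f α u u 0 :=
  ⟨fun _ => u, rfl, rfl, by omega⟩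

theorem ChainLen.comp {α : ℝ} {u v w : X} {S T : ℕ}
    (h1 : ChainLen f α u v S) (h2 : ChainLen f α v w T) : ChainLen f α u w (S + T) := by
  obtain ⟨z1, hz10, hz1S, hz1⟩ := h1
  obtain ⟨z2, hz20, hz2T, hz2⟩ := h2
  refine ⟨fun i => if i ≤ S then z1 i else z2 (i - S), by simp [hz10], ?_, ?_⟩
  · rcases Nat.eq_zero_or_pos T with hT | hT
    · simp [hT, hz1S, hz2T.symm, hz20, hT ▸ hz2T]
    · have : ¬ S + T ≤ S := by omega
      simp only [this, if_false]
      have e : S + T - S = T := by omega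
      rw [e, hz2T]
  · intro i hi
    rcases lt_trichotomy i S with h | h | h
    · have e1 : i ≤ S := le_of_lt h
      have e2 : i + 1 ≤ S := by omega
      simp only [e1, e2, if_true]
      exact hz1 i h
    · subst h
      have e1 : i ≤ i := le_refl _
      have hT : 0 < T := by omega
      have e2 : ¬ i + 1 ≤ i := by omega
      simp only [e1, e2, if_true, if_false]
      have e3 : i + 1 - i = 1 := by omega
      rw [e3, hz1S, ← hz20]
      exact hz2 0 hT
    · have e1 : ¬ i ≤ S := by omega
      have e2 : ¬ i + 1 ≤ S := by omega
      simp only [e1, e2, if_false]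
      have e3 : i + 1 - S = (i - S) + 1 := by omega
      rw [e3]
      exact hz2 (i - S) (by omega)
  
theorem ChainLen.ride {α : ℝ} (hα : 0 ≤ α) (u : X) (n : ℕ) : ChainLen f α u (f^[n] u) n := by
  refine ⟨fun i => f^[i] u, by simp, rfl, fun i _ => ?_⟩
  simp only []
  rw [show f (f^[i] u) = f^[i+1] u from (Function.iterate_succ_apply' f i u).symm]
  simpa using hα

theorem ChainLen.toRel {α : ℝ} {u v : X} {T : ℕ} (hT : 0 < T) (h : ChainLen f α u v T) :
    ChainRel f α u v := by
  obtain ⟨z, h0, hTv, hs⟩ := h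
  exact ⟨T, z, hT, h0, hTv, hs⟩

theorem ChainRel.toLen {α : ℝ} {u v : X} (h : ChainRel f α u v) :
    ∃ T : ℕ, 0 < T ∧ ChainLen f α u v T := by
  obtain ⟨n, z, hn, h0, hnv, hs⟩ := h
  exact ⟨n, hn, z, h0, hnv, hs⟩
end C
section D

theorem addsubgroup_closure_sum_realize {n : ℕ} [NeZero n] (S : Set (ZMod n)) {x : ZMod n}
    (h : x ∈ AddSubgroup.closure S) :
    ∃ l : List (ZMod n), (∀ e ∈ l, e ∈ S) ∧ l.sum = x := by
  classical
  set M : AddSubmonoid (ZMod n) := AddSubmonoid.closure S with hM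
  have hneg : ∀ z ∈ M, -z ∈ M := by
    intro z hz
    induction hz using AddSubmonoid.closure_induction with
    | mem e he =>
        have hord : addOrderOf e • e = 0 := addOrderOf_nsmul_eq_zero e
        have hpos : 0 < addOrderOf e := IsOfFinAddOrder.addOrderOf_pos
          (isOfFinAddOrder_of_finite e)
        have h2 : (addOrderOf e - 1) • e + e = addOrderOf e • e := by
          conv_rhs => rw [← Nat.sub_add_cancel hpos]
          rw [succ_nsmul]
        have he' : e ∈ M := AddSubmonoid.subset_closure he
        have h3 : (addOrderOf e - 1) • e = -e :=
          eq_neg_of_add_eq_zero_left (h2.trans hord)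
        rw [← h3]
        exact AddSubmonoid.nsmul_mem M he' _
    | zero => simpa using M.zero_mem
    | add a b _ _ ha hb => rw [neg_add]; exact AddSubmonoid.add_mem _ ha hb
  set G : AddSubgroup (ZMod n) :=
    { carrier := M
      add_mem' := fun ha hb => AddSubmonoid.add_mem _ ha hb
      zero_mem' := M.zero_mem
      neg_mem' := fun ha => hneg _ ha } with hG
  have hle : AddSubgroup.closure S ≤ G :=
    (AddSubgroup.closure_le G).mpr AddSubmonoid.subset_closure
  have hx : x ∈ M := hle h
  exact AddSubmonoid.exists_list_of_mem_closure hx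

end D
section E
variable {X : Type*} [MetricSpace X] {f : X → X}

theorem iterate_periodic {q : X} {k : ℕ} (hk : f^[k] q = q) (t : ℕ) : f^[k * t] q = q := by
  induction t with
  | zero => simp
  | succ s ih =>
      rw [Nat.mul_succ, Function.iterate_add_apply, hk, ih]

theorem iterate_periodic_dvd {q : X} {k T : ℕ} (hk : f^[k] q = q) (hd : k ∣ T) : f^[T] q = q := by
  obtain ⟨t, rfl⟩ := hd
  exact iterate_periodic hk t

/-- the canonical full orbit through a periodic point. -/
noncomputable def pOrbit (f : X → X) (q : X) (k : ℕ) : ℤ → X :=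
  fun j => f^[(j % (k : ℤ)).toNat] q

theorem pOrbit_zero (f : X → X) (q : X) {k : ℕ} (hkpos : 0 < k) : pOrbit f q k 0 = q := by
  simp [pOrbit]

theorem pOrbit_fullOrbit {q : X} {k : ℕ} (hkpos : 0 < k) (hk : f^[k] q = q) :
    FullOrbit f (pOrbit f q k) := by
  intro n
  unfold pOrbit
  have hkz : (0:ℤ) < (k:ℤ) := by exact_mod_cast hkpos
  have h1 : 0 ≤ n % (k:ℤ) := Int.emod_nonneg n (by omega)
  have h2 : n % (k:ℤ) < k := Int.emod_lt_of_pos n hkz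
  have e0 : n + 1 = (n % (k:ℤ) + 1) + (k:ℤ) * (n / k) := by
    have := Int.emod_def n (k:ℤ)
    omega
  have e0' : (n + 1) % (k:ℤ) = (n % (k:ℤ) + 1) % k := by
    rw [e0, Int.add_mul_emod_self_left]
  rcases eq_or_lt_of_le (by omega : n % (k:ℤ) + 1 ≤ (k:ℤ)) with he | hl
  · have e1 : (n+1) % (k:ℤ) = 0 := by rw [e0', he, Int.emod_self]
    rw [e1]
    have e2 : (n % (k:ℤ)).toNat + 1 = k := by omega
    rw [show f (f^[(n % (k:ℤ)).toNat] q) = f^[(n % (k:ℤ)).toNat + 1] q from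
      (Function.iterate_succ_apply' f _ q).symm, e2]
    simpa using hk
  · have e1 : (n+1) % (k:ℤ) = n % k + 1 := by
      rw [e0']
      exact Int.emod_eq_of_lt (by omega) hl
    rw [e1]
    have e2 : (n % (k:ℤ) + 1).toNat = (n % (k:ℤ)).toNat + 1 := by omega
    rw [e2, Function.iterate_succ_apply']

theorem pOrbit_spec (f : X → X) (q : X) {k : ℕ} (hkpos : 0 < k) (j : ℤ) :
    ∃ i : ℕ, i < k ∧ pOrbit f q k j = f^[i] q := by
  have hkz : (0:ℤ) < (k:ℤ) := by exact_mod_cast hkpos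
  have h1 : 0 ≤ j % (k:ℤ) := Int.emod_nonneg j (by omega)
  have h2 : j % (k:ℤ) < k := Int.emod_lt_of_pos j hkz
  exact ⟨(j % (k:ℤ)).toNat, by omega, rfl⟩

theorem squeeze_dist_zero {g h : ℕ → X} {u : ℕ → X}
    (h1 : Tendsto (fun n => dist (g n) (u n)) atTop (𝓝 0))
    (h2 : Tendsto (fun n => dist (u n) (h n)) atTop (𝓝 0)) :
    Tendsto (fun n => dist (g n) (h n)) atTop (𝓝 0) := by
  have := h1.add h2
  rw [add_zero] at this
  apply squeeze_zero (fun n => dist_nonneg) (fun n => dist_triangle (g n) (u n) (h n)) this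
end E
section F
variable {X : Type*} [MetricSpace X] {f : X → X}

theorem ChainLen.single {α : ℝ} {u v : X} (h : dist (f u) v ≤ α) : ChainLen f α u v 1 := by
  refine ⟨fun i => if i = 0 then u else v, by simp, by simp, ?_⟩
  intro i hi
  have : i = 0 := by omega
  subst this
  simpa using h

theorem ChainRel.comp {α : ℝ} {u v w : X} (h1 : ChainRel f α u v) (h2 : ChainRel f α v w) :
    ChainRel f α u w := by
  obtain ⟨S, hS, c1⟩ := h1.toLen
  obtain ⟨T, hT, c2⟩ := h2.toLen
  exact (c1.comp c2).toRel (by omega)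

theorem basic_chain {B : Set X} (hB : IsBasicSet f B) {u v : X} (hu : u ∈ B) (hv : v ∈ B)
    {α : ℝ} (hα : 0 < α) : ∃ L : ℕ, 0 < L ∧ ChainLen f α u v L := by
  obtain ⟨x₀, _, rfl⟩ := hB
  have h1 : ChainRel f α u x₀ := (hu.2 α hα).2
  have h2 : ChainRel f α x₀ v := (hv.2 α hα).1
  obtain ⟨S, hS, c1⟩ := h1.toLen
  obtain ⟨T, hT, c2⟩ := h2.toLen
  exact ⟨S + T, by omega, c1.comp c2⟩

theorem loops_realize {α : ℝ} {q : X} {kq : ℕ} [NeZero kq]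
    (l : List (ZMod kq)) (hl : ∀ e ∈ l, ∃ n : ℕ, ChainLen f α q q n ∧ (n : ZMod kq) = e) :
    ∃ σ : ℕ, ChainLen f α q q σ ∧ (σ : ZMod kq) = l.sum := by
  induction l with
  | nil => exact ⟨0, ChainLen.refl α q, by simp⟩
  | cons e t ih =>
      obtain ⟨n, hn, hne⟩ := hl e (by simp)
      obtain ⟨σ, hσ, hσe⟩ := ih (fun e' he' => hl e' (by simp [he']))
      exact ⟨n + σ, hn.comp hσ, by push_cast [hne, hσe]; simp [List.sum_cons]⟩
end F
section G
variable {X : Type*} [MetricSpace X] [CompactSpace X] {f : X → X}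

theorem main_step (hf : Continuous f) (hsurj : Function.Surjective f)
    {c : ℝ} (hc : 0 < c) (hE : BiAsympCExpWith f c) (hsh : Shadowing f)
    {B : Set X} (hB : IsBasicSet f B)
    {p : X} {kp : ℕ} (hkp : 0 < kp) (hfp : f^[kp] p = p) (hpB : p ∈ B)
    {q : X} {kq : ℕ} (hkq : 0 < kq) (hfq : f^[kq] q = q) (hqB : q ∈ B)
    (hpair : ∀ η > 0, ∃ x ∈ Ws f p ∩ B, ∃ y ∈ Ws f q ∩ B, dist x y ≤ η) :
    (Ws f p ∩ B) ⊆ closure (Ws f q ∩ B) := by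
  classical
  rintro a ⟨haWs, haB⟩
  rw [Metric.mem_closure_iff]
  intro ε hε
  -- constants
  set ε₀ : ℝ := min (ε / 2) c with hε₀def
  have hε₀pos : 0 < ε₀ := lt_min (by linarith) hc
  have hε₀c : ε₀ ≤ c := min_le_right _ _
  have hε₀ε : ε₀ < ε := lt_of_le_of_lt (min_le_left _ _) (by linarith)
  obtain ⟨δ, hδ, hTS⟩ := two_sided_shadowing hf hsh ε₀ hε₀pos
  -- uniform continuity
  obtain ⟨η, hη, hηspec⟩ : ∃ η > 0, ∀ u v : X, dist u v ≤ η → dist (f u) (f v) ≤ δ := by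
    have huc := CompactSpace.uniformContinuous_of_continuous hf
    rw [Metric.uniformContinuous_iff] at huc
    obtain ⟨η', hη', hspec⟩ := huc δ hδ
    exact ⟨η' / 2, by linarith, fun u v huv =>
      le_of_lt (hspec (lt_of_le_of_lt huv (by linarith)))⟩
  obtain ⟨x, ⟨hxWs, hxB⟩, y, ⟨hyWs, hyB⟩, hxy⟩ := hpair η hη
  have hfxy : dist (f x) (f y) ≤ δ := hηspec _ _ hxy
  -- approach time
  obtain ⟨N, hN⟩ : ∃ N : ℕ, ∀ n ≥ N,
      dist (f^[n] p) (f^[n] a) ≤ δ / 2 ∧ dist (f^[n] p) (f^[n] x) ≤ δ / 2 := by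
    have h1 := haWs.eventually (ge_mem_nhds (show (0:ℝ) < δ/2 by linarith)) |>.and
      (hxWs.eventually (ge_mem_nhds (show (0:ℝ) < δ/2 by linarith)))
    rw [eventually_atTop] at h1
    obtain ⟨N, hN⟩ := h1
    exact ⟨N, fun n hn => ⟨(hN n hn).1, (hN n hn).2⟩⟩
  -- chains between points of B at scale δ
  obtain ⟨Lqa, hLqapos, hLqa⟩ := basic_chain hB hqB haB hδ
  obtain ⟨Laq, hLaqpos, hLaq⟩ := basic_chain hB haB hqB hδ
  obtain ⟨Lqx, hLqxpos, hLqx⟩ := basic_chain hB hqB hxB hδ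
  obtain ⟨Lpq, hLpqpos, hLpq⟩ := basic_chain hB hpB hqB hδ
  -- chain from f^[N+1] x to q
  obtain ⟨M₂, hM₂⟩ : ∃ M₂ : ℕ, ChainLen f δ (f^[N+1] x) q M₂ := by
    have step1 : ChainLen f δ (f^[N+1] x) (f^[N+2] p) 1 := by
      apply ChainLen.single
      rw [show f (f^[N+1] x) = f^[N+2] x from (Function.iterate_succ_apply' f (N+1) x).symm]
      rw [dist_comm]
      linarith [(hN (N+2) (by omega)).2]
    have step2 : ChainLen f δ (f^[N+2] p) p (kp * (N+2) - (N+2)) := by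
      have hr := ChainLen.ride (f := f) (le_of_lt hδ) (f^[N+2] p) (kp * (N+2) - (N+2))
      have he : f^[kp * (N+2) - (N+2)] (f^[N+2] p) = p := by
        rw [← Function.iterate_add_apply]
        have hle : N + 2 ≤ kp * (N + 2) := Nat.le_mul_of_pos_left _ hkp
        have e : kp * (N+2) - (N+2) + (N+2) = kp * (N + 2) := by omega
        rw [e]
        exact iterate_periodic hfp (N+2)
      rwa [he] at hr
    exact ⟨_, (step1.comp step2).comp hLpq⟩
  -- the two aligned jump chains
  have D1a : ChainLen f δ a (f^[N+1] x) (N + 1) := by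
    have hr := ChainLen.ride (f := f) (le_of_lt hδ) a N
    have hstep : ChainLen f δ (f^[N] a) (f^[N+1] x) 1 := by
      apply ChainLen.single
      rw [show f (f^[N] a) = f^[N+1] a from (Function.iterate_succ_apply' f N a).symm]
      calc dist (f^[N+1] a) (f^[N+1] x)
          ≤ dist (f^[N+1] a) (f^[N+1] p) + dist (f^[N+1] p) (f^[N+1] x) := dist_triangle _ _ _
        _ ≤ δ / 2 + δ / 2 := by
            have h := hN (N+1) (by omega)
            rw [dist_comm]
            exact add_le_add h.1 h.2
        _ = δ := by ring
    exact hr.comp hstep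
  have D1x : ChainLen f δ x (f^[N+1] x) (N + 1) := ChainLen.ride (le_of_lt hδ) x (N+1)
  -- number-theoretic step: a chain a → x of length divisible by kq
  haveI : NeZero kq := ⟨hkq.ne'⟩
  obtain ⟨T, hTpos, hTdvd, hchainax⟩ :
      ∃ T : ℕ, 0 < T ∧ (kq : ℕ) ∣ T ∧ ChainLen f δ a x T := by
    set S : Set (ZMod kq) := {e | ∃ n : ℕ, ChainLen f δ q q n ∧ (n : ZMod kq) = e} with hS
    have hs₁ : ((Lqa + Laq : ℕ) : ZMod kq) ∈ AddSubgroup.closure S :=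
      AddSubgroup.subset_closure ⟨Lqa + Laq, hLqa.comp hLaq, rfl⟩
    have hs₂ : ((Lqa + (N+1) + M₂ : ℕ) : ZMod kq) ∈ AddSubgroup.closure S :=
      AddSubgroup.subset_closure ⟨Lqa + (N+1) + M₂, (hLqa.comp D1a).comp hM₂, rfl⟩
    have hs₃ : ((Lqx + (N+1) + M₂ : ℕ) : ZMod kq) ∈ AddSubgroup.closure S :=
      AddSubgroup.subset_closure ⟨Lqx + (N+1) + M₂, (hLqx.comp D1x).comp hM₂, rfl⟩
    have hτ : -((Laq : ZMod kq) + (Lqx : ZMod kq)) ∈ AddSubgroup.closure S := by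
      have he : -((Laq : ZMod kq) + (Lqx : ZMod kq)) =
          (-((Lqa + Laq : ℕ) : ZMod kq)) + (-((Lqx + (N+1) + M₂ : ℕ) : ZMod kq))
            + ((Lqa + (N+1) + M₂ : ℕ) : ZMod kq) := by
        push_cast
        ring
      rw [he]
      exact AddSubgroup.add_mem _ (AddSubgroup.add_mem _ (AddSubgroup.neg_mem _ hs₁)
        (AddSubgroup.neg_mem _ hs₃)) hs₂
    obtain ⟨l, hl, hlsum⟩ := addsubgroup_closure_sum_realize S hτ
    obtain ⟨σ, hσchain, hσsum⟩ := loops_realize l hl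
    refine ⟨Laq + σ + Lqx, by omega, ?_, (hLaq.comp hσchain).comp hLqx⟩
    have : ((Laq + σ + Lqx : ℕ) : ZMod kq) = 0 := by
      push_cast
      rw [hσsum, hlsum]
      ring
    exact (ZMod.natCast_eq_zero_iff _ _).mp this
  -- the grand pseudo-orbit
  obtain ⟨czQ, hczQ0, hczQm, hczQs⟩ := hLqa
  obtain ⟨czT, hczT0, hczTT, hczTs⟩ := hchainax
  set m : ℕ := Lqa with hmdef
  set qbar : ℤ → X := pOrbit f q kq with hqbardef
  have hqbar_orb : FullOrbit f qbar := pOrbit_fullOrbit hkq hfq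
  have hqbar0 : qbar 0 = q := pOrbit_zero f q hkq
  set u : ℤ → X := fun n =>
    if n < -(m:ℤ) then qbar (n + m)
    else if n ≤ 0 then czQ (n + m).toNat
    else if n ≤ (T:ℤ) then czT n.toNat
    else f^[(n - T).toNat] y with hudef
  have hu0 : u 0 = a := by
    have h1 : ¬ ((0:ℤ) < -(m:ℤ)) := by omega
    simp only [hudef, h1, if_false, le_refl, if_true]
    simpa using hczQm
  have huqtail : ∀ n : ℤ, n ≤ -(m:ℤ) → u n = qbar (n + m) := by
    intro n hn
    rcases eq_or_lt_of_le hn with he | hl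
    · subst he
      have h1 : ¬ (-(m:ℤ) < -(m:ℤ)) := by omega
      have h2 : -(m:ℤ) ≤ 0 := by omega
      simp only [hudef, h1, if_false, h2, if_true]
      rw [show (-(m:ℤ) + m).toNat = 0 by omega, hczQ0, show (-(m:ℤ) + (m:ℤ)) = 0 by ring, hqbar0]
    · simp only [hudef, hl, if_true]
  have huytail : ∀ n : ℤ, (T:ℤ) < n → u n = f^[(n - T).toNat] y := by
    intro n hn
    have h1 : ¬ (n < -(m:ℤ)) := by omega
    have h2 : ¬ (n ≤ 0) := by omega
    have h3 : ¬ (n ≤ (T:ℤ)) := by omega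
    simp only [hudef, h1, h2, h3, if_false]
  -- pseudo-orbit property
  have hu : ∀ n : ℤ, dist (f (u n)) (u (n + 1)) ≤ δ := by
    intro n
    rcases lt_or_ge (n+1) (-(m:ℤ)) with h1 | h1
    · -- both in qbar region
      rw [huqtail n (by omega), huqtail (n+1) (by omega), hqbar_orb (n + m),
        show n + (m:ℤ) + 1 = n + 1 + m by ring]
      simp [le_of_lt hδ]
    rcases lt_or_ge n (-(m:ℤ)) with h2 | h2
    · -- n = -m-1 : from qbar into chain start
      have hn : n = -(m:ℤ) - 1 := by omega
      subst hn
      rw [huqtail _ (by omega), huqtail _ (by omega), hqbar_orb,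
        show (-(m:ℤ) - 1 + m + 1) = 0 by ring, show (-(m:ℤ) - 1 + 1 + m) = 0 by ring]
      simp [le_of_lt hδ]
    rcases lt_or_ge n 0 with h3 | h3
    · -- chain czQ steps : -m ≤ n ≤ -1
      have e1 : ¬ (n < -(m:ℤ)) := by omega
      have e2 : n ≤ 0 := by omega
      have e3 : ¬ (n + 1 < -(m:ℤ)) := by omega
      have e4 : n + 1 ≤ 0 := by omega
      simp only [hudef, e1, e2, e3, e4, if_false, if_true]
      have e5 : (n + 1 + m).toNat = (n + m).toNat + 1 := by omega
      rw [e5]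
      exact hczQs _ (by omega)
    rcases eq_or_lt_of_le h3 with h4 | h4
    · -- n = 0 : step from a into czT
      have hn : n = 0 := h4.symm
      subst hn
      rw [hu0]
      have e1 : ¬ ((1:ℤ) < -(m:ℤ)) := by omega
      have e2 : ¬ ((1:ℤ) ≤ 0) := by omega
      have e3 : ((1:ℤ)) ≤ (T:ℤ) := by omega
      simp only [hudef, zero_add, e1, e2, e3, if_false, if_true]
      rw [show ((1:ℤ)).toNat = 1 by omega, ← hczT0]
      exact hczTs 0 (by omega)
    rcases lt_or_ge n (T:ℤ) with h5 | h5
    · -- czT steps : 1 ≤ n ≤ T-1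
      have e1 : ¬ (n < -(m:ℤ)) := by omega
      have e2 : ¬ (n ≤ 0) := by omega
      have e3 : n ≤ (T:ℤ) := by omega
      have e4 : ¬ (n + 1 < -(m:ℤ)) := by omega
      have e5 : ¬ (n + 1 ≤ 0) := by omega
      have e6 : n + 1 ≤ (T:ℤ) := by omega
      simp only [hudef, e1, e2, e3, e4, e5, e6, if_false, if_true]
      have e7 : (n + 1).toNat = n.toNat + 1 := by omega
      rw [e7]
      exact hczTs _ (by omega)
    rcases eq_or_lt_of_le h5 with h6 | h6
    · -- n = T : the jump x → f y
      have hn : n = (T:ℤ) := h6.symm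
      subst hn
      have e1 : ¬ ((T:ℤ) < -(m:ℤ)) := by omega
      have e2 : ¬ ((T:ℤ) ≤ 0) := by omega
      have e3 : (T:ℤ) ≤ (T:ℤ) := le_refl _
      have e4 : ¬ ((T:ℤ) + 1 < -(m:ℤ)) := by omega
      have e5 : ¬ ((T:ℤ) + 1 ≤ 0) := by omega
      have e6 : ¬ ((T:ℤ) + 1 ≤ (T:ℤ)) := by omega
      simp only [hudef, e1, e2, e3, e4, e5, e6, if_false, if_true]
      rw [show ((T:ℤ)).toNat = T by omega, hczTT,
        show ((T:ℤ) + 1 - T).toNat = 1 by omega]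
      simpa using hfxy
    · -- y-orbit tail
      rw [huytail n h6, huytail (n+1) (by omega)]
      have e : (n + 1 - T).toNat = (n - T).toNat + 1 := by omega
      rw [e, Function.iterate_succ_apply']
      simp [le_of_lt hδ]
  obtain ⟨wb, hwb_orb, hwb⟩ := hTS u hu
  set w : X := wb 0 with hwdef
  have hwa : dist a w < ε := by
    have := hwb 0
    rw [hu0] at this
    rw [dist_comm]
    exact lt_of_le_of_lt this hε₀ε
  -- forward asymptotics: w ∈ Ws f q
  have hwb_nat : ∀ n : ℕ, wb n = f^[n] w := by
    intro n
    have := fullOrbit_iterate f hwb_orb 0 n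
    simpa using this
  have hWsq : w ∈ Ws f q := by
    obtain ⟨yo, hyo_orb, hyo_nat⟩ := exists_fullOrbit f hsurj y
    set W1 : ℤ → X := fun z => wb (z + ((T:ℤ) + 1)) with hW1
    set Y1 : ℤ → X := fun z => yo (z + 1) with hY1
    have hW1orb : FullOrbit f W1 := fullOrbit_shift f hwb_orb _
    have hY1orb : FullOrbit f Y1 := fullOrbit_shift f hyo_orb _
    have hYval : ∀ n : ℕ, Y1 n = f^[n + 1] y := by
      intro n
      have : ((n:ℤ) + 1) = ((n + 1 : ℕ) : ℤ) := by push_cast; ring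
      simp only [hY1, this, hyo_nat]
    have hbound : ∀ n : ℕ, dist (W1 n) (Y1 n) ≤ c := by
      intro n
      have h1 := hwb ((n:ℤ) + T + 1)
      rw [huytail ((n:ℤ) + T + 1) (by omega)] at h1
      have e : ((n:ℤ) + T + 1 - T).toNat = n + 1 := by omega
      rw [e] at h1
      rw [hYval n]
      have e2 : (n:ℤ) + ((T:ℤ) + 1) = (n:ℤ) + T + 1 := by ring
      simp only [hW1, e2]
      exact le_trans h1 hε₀c
    have htend := hE.1 W1 Y1 hW1orb hY1orb hbound
    -- translate to dist (f^[n] q) (f^[n] w) → 0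
    have ht1 : Tendsto (fun n : ℕ => dist (f^[n + (T+1)] w) (f^[n+1] y)) atTop (𝓝 0) := by
      apply htend.congr
      intro n
      rw [hYval n]
      congr 1
      have e2 : (n:ℤ) + ((T:ℤ) + 1) = ((n + (T+1) : ℕ) : ℤ) := by push_cast; ring
      simp only [hW1, e2, hwb_nat]
    have ht2 : Tendsto (fun n : ℕ => dist (f^[n+1] y) (f^[n + (T+1)] q)) atTop (𝓝 0) := by
      have hyq : Tendsto (fun n : ℕ => dist (f^[n+1] q) (f^[n+1] y)) atTop (𝓝 0) := by
        have := hyWs.comp (tendsto_add_atTop_nat 1)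
        exact this
      apply hyq.congr
      intro n
      rw [dist_comm]
      congr 1
      rw [show n + (T + 1) = (n + 1) + T by ring]
      rw [Function.iterate_add_apply f (n+1) T q, iterate_periodic_dvd hfq hTdvd]
    have ht3 : Tendsto (fun n : ℕ => dist (f^[n + (T+1)] q) (f^[n + (T+1)] w)) atTop (𝓝 0) := by
      have := squeeze_dist_zero ht1 ht2
      apply (this.congr (fun n => dist_comm _ _)).congr
      intro n
      rw [dist_comm]
    rw [Ws, Set.mem_setOf_eq, ← tendsto_add_atTop_iff_nat (T+1)]
    exact ht3
  -- backward asymptotics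
  have hback : Tendsto (fun n : ℕ => dist (wb (-(n:ℤ) - m)) (qbar (-(n:ℤ)))) atTop (𝓝 0) := by
    set W2 : ℤ → X := fun z => wb (z + (-(m:ℤ))) with hW2
    have hW2orb : FullOrbit f W2 := fullOrbit_shift f hwb_orb _
    have hbound2 : ∀ n : ℕ, dist (W2 (-(n:ℤ))) (qbar (-(n:ℤ))) ≤ c := by
      intro n
      have h1 := hwb (-(n:ℤ) - m)
      have h2 : u (-(n:ℤ) - m) = qbar (-(n:ℤ)) := by
        rw [huqtail _ (by omega), show (-(n:ℤ) - m + m) = -(n:ℤ) by ring]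
      rw [h2] at h1
      have e : -(n:ℤ) + -(m:ℤ) = -(n:ℤ) - m := by ring
      simp only [hW2, e]
      exact le_trans h1 hε₀c
    have := hE.2 W2 qbar hW2orb hqbar_orb hbound2
    apply this.congr
    intro n
    have e : -(n:ℤ) + -(m:ℤ) = -(n:ℤ) - m := by ring
    simp only [hW2, e]
  -- chains from w to q with arbitrary error
  have hwq : ∀ α > 0, ChainRel f α w q := by
    intro α hα
    have hWsq' := hWsq
    rw [Ws, Set.mem_setOf_eq] at hWsq'
    have hev := (hWsq'.eventually (ge_mem_nhds hα)).and (eventually_ge_atTop 1)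
    rw [eventually_atTop] at hev
    obtain ⟨n₀, hn₀⟩ := hev
    obtain ⟨hd, hn₀1⟩ := hn₀ (max n₀ 1) (le_max_left _ _)
    set n1 : ℕ := max n₀ 1 with hn1def
    -- ride w for n1 - 1 steps, jump to f^[n1] q, ride to q
    have c1 : ChainLen f α w (f^[n1 - 1] w) (n1 - 1) := ChainLen.ride (le_of_lt hα) w _
    have c2 : ChainLen f α (f^[n1 - 1] w) (f^[n1] q) 1 := by
      apply ChainLen.single
      rw [show f (f^[n1-1] w) = f^[n1] w by
        rw [← Function.iterate_succ_apply' f (n1-1) w]; congr 1; omega]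
      rw [dist_comm]
      exact hd
    have c3 : ChainLen f α (f^[n1] q) q (kq * n1 - n1) := by
      have hr := ChainLen.ride (f := f) (le_of_lt hα) (f^[n1] q) (kq * n1 - n1)
      have he : f^[kq * n1 - n1] (f^[n1] q) = q := by
        rw [← Function.iterate_add_apply]
        have hle : n1 ≤ kq * n1 := Nat.le_mul_of_pos_left _ hkq
        rw [show kq * n1 - n1 + n1 = kq * n1 by omega]
        exact iterate_periodic hfq n1
      rwa [he] at hr
    exact ((c1.comp c2).comp c3).toRel (by omega)
  -- chains from q to w with arbitrary error
  have hqw : ∀ α > 0, ChainRel f α q w := by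
    intro α hα
    have hev := hback.eventually (ge_mem_nhds hα)
    rw [eventually_atTop] at hev
    obtain ⟨i₀, hi₀⟩ := hev
    have hd := hi₀ i₀ (le_refl _)
    obtain ⟨jq, hjq, hjqe⟩ := pOrbit_spec f q hkq (-(i₀:ℤ))
    have c1 : ChainLen f α q (f^[jq + kq - 1] q) (jq + kq - 1) := by
      have := ChainLen.ride (f := f) (le_of_lt hα) q (jq + kq - 1)
      exact this
    have c2 : ChainLen f α (f^[jq + kq - 1] q) (wb (-(i₀:ℤ) - m)) 1 := by
      apply ChainLen.single
      rw [show f (f^[jq + kq - 1] q) = f^[jq + kq] q by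
        rw [← Function.iterate_succ_apply' f (jq + kq - 1) q]; congr 1; omega]
      rw [Function.iterate_add_apply f jq kq q, hfq, ← hjqe, dist_comm]
      exact hd
    have c3 : ChainLen f α (wb (-(i₀:ℤ) - m)) w (i₀ + m) := by
      have hr := ChainLen.ride (f := f) (le_of_lt hα) (wb (-(i₀:ℤ) - m)) (i₀ + m)
      have he : f^[i₀ + m] (wb (-(i₀:ℤ) - m)) = w := by
        rw [← fullOrbit_iterate f hwb_orb (-(i₀:ℤ) - m) (i₀ + m)]
        congr 1
        push_cast
        ring
      rwa [he] at hr
    exact ((c1.comp c2).comp c3).toRel (by omega)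
  -- w ∈ B
  have hwB : w ∈ B := by
    obtain ⟨x₀, hx₀CR, hBeq⟩ := hB
    have hq' : ChainRecurrent f q ∧ ChainEquiv f x₀ q := by rw [hBeq] at hqB; exact hqB
    rw [hBeq]
    refine ⟨?_, ?_⟩
    · intro α hα
      exact (hwq α hα).comp (hqw α hα)
    · intro α hα
      exact ⟨((hq'.2 α hα).1).comp (hqw α hα), (hwq α hα).comp ((hq'.2 α hα).2)⟩
  exact ⟨w, ⟨hWsq, hwB⟩, hwa⟩

end G

/-- If `p, q` are periodic points of the basic set `B` and `C_p ∩ C_q ≠ ∅`, then `C_p = C_q`. -/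
theorem cp_eq_cq_of_inter {X : Type*} [MetricSpace X] [CompactSpace X]
    (f : X → X) (hf : Continuous f) (hsurj : Function.Surjective f)
    (hexp : BiAsympCExpansive f) (hsh : Shadowing f)
    (B : Set X) (hB : IsBasicSet f B)
    (p : X) (hp : p ∈ Function.periodicPts f) (hpB : p ∈ B)
    (q : X) (hq : q ∈ Function.periodicPts f) (hqB : q ∈ B)
    (hne : (closure (Ws f p ∩ B) ∩ closure (Ws f q ∩ B)).Nonempty) :
    closure (Ws f p ∩ B) = closure (Ws f q ∩ B) := by
  obtain ⟨c, hc, hE⟩ := hexp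
  obtain ⟨kp, hkp, hfp⟩ := hp
  obtain ⟨kq, hkq, hfq⟩ := hq
  obtain ⟨z, hz1, hz2⟩ := hne
  have hpair : ∀ η > (0:ℝ), ∃ x ∈ Ws f p ∩ B, ∃ y ∈ Ws f q ∩ B, dist x y ≤ η := by
    intro η hη
    rw [Metric.mem_closure_iff] at hz1 hz2
    obtain ⟨x, hx, hzx⟩ := hz1 (η/2) (by linarith)
    obtain ⟨y, hy, hzy⟩ := hz2 (η/2) (by linarith)
    refine ⟨x, hx, y, hy, ?_⟩
    calc dist x y ≤ dist x z + dist z y := dist_triangle _ _ _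
      _ ≤ η/2 + η/2 := by rw [dist_comm x z]; exact add_le_add hzx.le hzy.le
      _ = η := by ring
  have hpair' : ∀ η > (0:ℝ), ∃ x ∈ Ws f q ∩ B, ∃ y ∈ Ws f p ∩ B, dist x y ≤ η := by
    intro η hη
    obtain ⟨x, hx, y, hy, hxy⟩ := hpair η hη
    exact ⟨y, hy, x, hx, by rwa [dist_comm]⟩
  have h1 := main_step hf hsurj hc hE hsh hB hkp hfp hpB hkq hfq hqB hpair
  have h2 := main_step hf hsurj hc hE hsh hB hkq hfq hqB hkp hfp hpB hpair'
  apply le_antisymm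
  · exact closure_minimal h1 isClosed_closure
  · exact closure_minimal h2 isClosed_closure
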